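/- Let 𝔻 be the word comparison function associated with the cost function D given by D(α,α) = 0 for all α ∈ Σ ∪ {ε}, D(ε,β) = 1 for all β ∈ Σ, and D(α,β) = ⊥ otherwise. Then for all words w, w′ ∈ Σ*: 𝔻(w,w′) = |w′| − |w| if w is a subword (scattered subsequence) of w′, and 𝔻(w,w′) = ⊥ otherwise. -/

import Mathlib

/-!
The word comparison function associated with the "deletion" cost function
measures subword (scattered subsequence) containment.

A cost function over `S × S`, with `S = Σ ∪ {ε}`, is encoded as a function
`Option σ → Option σ → Option ℕ` (`none : Option σ` is `ε`, and
`none : Option ℕ` is the undefined value `⊥`) such that `C α α = 0`.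

A split-up of a word `u` of size `n ≥ 1` is a tuple `(u₁, …, u_n) ∈ Sⁿ` with
`u₁ ⋯ u_n = u`.  An alignment of `u` and `v` is encoded as a list
`l : List (Option σ × Option σ)` with `l ≠ []` whose first (resp. second)
components form a split-up of `u` (resp. of `v`); concatenation of a split-up
is `List.filterMap`.  Its cost is the sum of the costs of its pairs, where
`⊥ + x = x + ⊥ = ⊥` (`Option.map₂ (·+·)`).

The word comparison function `𝔽` associated with `C` maps `(u, v)` to the
minimum of the costs of all alignments of `u` and `v` whose cost is defined,
and to `⊥` if there is no such alignment.
-/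

/-- A cost function: `C α α = 0` for every `α ∈ Σ ∪ {ε}`. -/
structure CostFun (σ : Type) where
  C : Option σ → Option σ → Option ℕ
  refl : ∀ α, C α α = some 0

/-- The cost of an alignment: the `⊥`-absorbing sum of the costs of its pairs. -/
def alignCost {σ : Type} (C : CostFun σ) (l : List (Option σ × Option σ)) : Option ℕ :=
  (l.map fun p => C.C p.1 p.2).foldr (fun x y => Option.map₂ (· + ·) x y) (some 0)

/-- The set of defined costs of alignments (of size `≥ 1`) between `u` and `v`. -/
def alignCosts {σ : Type} (C : CostFun σ) (u v : List σ) : Set ℕ :=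
  {n | ∃ l : List (Option σ × Option σ), l ≠ [] ∧
        l.filterMap Prod.fst = u ∧ l.filterMap Prod.snd = v ∧ alignCost C l = some n}

/-- The word comparison function associated with a cost function: the minimal
cost of an alignment of `u` and `v`, or `⊥` if no alignment has defined cost. -/
noncomputable def wordComp {σ : Type} (C : CostFun σ) (u v : List σ) : Option ℕ := by
  classical
  exact if (alignCosts C u v).Nonempty then some (sInf (alignCosts C u v)) else none

/-- The cost function `D`: `D(α,α) = 0`, `D(ε,β) = 1` for `β ∈ Σ`, `⊥` otherwise. -/
def delCost (σ : Type) [DecidableEq σ] : CostFun σ where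
  C α β := if α = β then some 0 else
    match α, β with
    | none, some _ => some 1
    | _, _ => none
  refl α := by simp

/-- **The word comparison function `𝔻` associated with `D` measures subwords:**
`𝔻(w, w') = |w'| - |w|` if `w` is a subword (scattered subsequence) of `w'`,
and `𝔻(w, w') = ⊥` otherwise. -/
lemma map₂_add_eq_some {x y : Option ℕ} {n : ℕ}
    (h : Option.map₂ (· + ·) x y = some n) :
    ∃ a b, x = some a ∧ y = some b ∧ n = a + b := by
  cases x <;> cases y <;> simp_all [Option.map₂] <;> omega

lemma alignCost_spec {σ : Type} [DecidableEq σ] :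
    ∀ (l : List (Option σ × Option σ)) (n : ℕ),
    alignCost (delCost σ) l = some n →
    (l.filterMap Prod.fst).Sublist (l.filterMap Prod.snd) ∧
    (l.filterMap Prod.snd).length = (l.filterMap Prod.fst).length + n := by
  intro l
  induction l with
  | nil =>
    intro n h
    simp [alignCost] at h
    simp [← h]
  | cons p l ih =>
    intro n h
    obtain ⟨a, b⟩ := p
    rw [alignCost, List.map_cons, List.foldr_cons] at h
    obtain ⟨c, m, hc, hm, rfl⟩ := map₂_add_eq_some h
    obtain ⟨h1, h2⟩ := ih m hm
    match a, b with
    | some a, some b =>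
      have : a = b ∧ c = 0 := by
        by_cases hab : a = b <;> simp [delCost, hab] at hc <;> simp_all
      obtain ⟨rfl, rfl⟩ := this
      simpa using ⟨h1, by omega⟩
    | none, some b =>
      have : c = 1 := by simp [delCost] at hc; omega
      subst this
      simpa using ⟨List.Sublist.cons _ h1, by omega⟩
    | none, none =>
      have : c = 0 := by simp [delCost] at hc; omega
      subst this
      simpa using ⟨h1, by omega⟩
    | some a, none =>
      simp [delCost] at hc

lemma sublist_align {σ : Type} [DecidableEq σ] {w w' : List σ} (h : w.Sublist w') :
    ∃ l : List (Option σ × Option σ), l ≠ [] ∧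
      l.filterMap Prod.fst = w ∧ l.filterMap Prod.snd = w' ∧
      alignCost (delCost σ) l = some (w'.length - w.length) := by
  induction h with
  | slnil => exact ⟨[(none, none)], by simp, by simp, by simp, by simp [alignCost, delCost]⟩
  | @cons w w' a h ih =>
    obtain ⟨l, -, h1, h2, h3⟩ := ih
    refine ⟨(none, some a) :: l, by simp, by simpa, by simpa, ?_⟩
    rw [alignCost, List.map_cons, List.foldr_cons]
    rw [alignCost] at h3
    rw [h3]
    have : (delCost σ).C none (some a) = some 1 := by simp [delCost]
    rw [this, Option.map₂_some_some]
    have := h.length_le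
    simp only [List.length_cons, Option.some.injEq]
    omega
  | @cons_cons w w' a h ih =>
    obtain ⟨l, -, h1, h2, h3⟩ := ih
    refine ⟨(some a, some a) :: l, by simp, by simpa, by simpa, ?_⟩
    rw [alignCost, List.map_cons, List.foldr_cons]
    rw [alignCost] at h3
    rw [h3]
    have : (delCost σ).C (some a) (some a) = some 0 := by simp [delCost]
    rw [this, Option.map₂_some_some]
    have := h.length_le
    simp only [List.length_cons, Option.some.injEq]
    omega

theorem wordComp_delCost {σ : Type} [Fintype σ] [DecidableEq σ] (w w' : List σ) :
    wordComp (delCost σ) w w' =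
      if w.Sublist w' then some (w'.length - w.length) else none := by
  have hset : ∀ n ∈ alignCosts (delCost σ) w w',
      w.Sublist w' ∧ n = w'.length - w.length := by
    rintro n ⟨l, -, h1, h2, h3⟩
    obtain ⟨hs, hl⟩ := alignCost_spec l n h3
    rw [h1, h2] at hs hl
    exact ⟨hs, by omega⟩
  by_cases h : w.Sublist w'
  · obtain ⟨l, hne, h1, h2, h3⟩ := sublist_align h
    have hmem : w'.length - w.length ∈ alignCosts (delCost σ) w w' :=
      ⟨l, hne, h1, h2, h3⟩
    rw [wordComp, if_pos h, if_pos ⟨_, hmem⟩]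
    congr 1
    refine le_antisymm (Nat.sInf_le hmem) (le_csInf ⟨_, hmem⟩ ?_)
    intro n hn
    exact (hset n hn).2.ge
  · rw [wordComp, if_neg h, if_neg]
    rintro ⟨n, hn⟩
    exact h (hset n hn).1
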